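/- Let p ≥ 1, let β̃ ∈ ℝ^p, and let I be a symmetric positive definite p×p real matrix. For λ ≥ 0 define b̂(λ) = −λ (I + λ·Id)⁻¹ β̃, v̂(λ) = (I + λ·Id)⁻¹ I (I + λ·Id)⁻¹ and m̂(λ) = v̂(λ) + b̂(λ) b̂(λ)ᵀ. Then for every nonzero positive semidefinite p×p real matrix B and every λ > 0 with λ · (β̃ᵀβ̃) < 2, one has trace(B m̂(λ)) < trace(B m̂(0)); consequently the function λ ↦ trace(B m̂(λ)) is not minimized at λ = 0 and attains values strictly smaller than its value at 0 at some λ > 0. -/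

import Mathlib

open Matrix

/-- Asymptotic bias of the ridge estimator at penalty `l`, with plug-in `β`. -/
noncomputable def ridgeBias {p : ℕ} (I : Matrix (Fin p) (Fin p) ℝ) (β : Fin p → ℝ)
    (l : ℝ) : Fin p → ℝ :=
  (-l) • ((I + l • (1 : Matrix (Fin p) (Fin p) ℝ))⁻¹ *ᵥ β)

/-- Asymptotic variance of the ridge estimator at penalty `l`. -/
noncomputable def ridgeVar {p : ℕ} (I : Matrix (Fin p) (Fin p) ℝ) (l : ℝ) :
    Matrix (Fin p) (Fin p) ℝ :=
  (I + l • (1 : Matrix (Fin p) (Fin p) ℝ))⁻¹ * I *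
    (I + l • (1 : Matrix (Fin p) (Fin p) ℝ))⁻¹

/-- Estimated second-order moment matrix `m̂(λ) = v̂(λ) + b̂(λ) b̂(λ)ᵀ`. -/
noncomputable def ridgeMoment {p : ℕ} (I : Matrix (Fin p) (Fin p) ℝ) (β : Fin p → ℝ)
    (l : ℝ) : Matrix (Fin p) (Fin p) ℝ :=
  ridgeVar I l + vecMulVec (ridgeBias I β l) (ridgeBias I β l)

variable {p : ℕ}

lemma aux_vecMulVec_mulVec (v : Fin p → ℝ) (x : Fin p → ℝ) :
    vecMulVec v v *ᵥ x = (v ⬝ᵥ x) • v := by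
  ext j
  simp [vecMulVec_apply, mulVec, dotProduct, Finset.sum_mul, Finset.mul_sum]
  exact Finset.sum_congr rfl fun k _ => by ring

lemma aux_vecMulVec_smul (c : ℝ) (v : Fin p → ℝ) :
    vecMulVec (c • v) (c • v) = (c * c) • vecMulVec v v := by
  ext i j
  simp [vecMulVec_apply]
  ring

lemma aux_vecMulVec_conj (A : Matrix (Fin p) (Fin p) ℝ) (x : Fin p → ℝ) :
    vecMulVec (A *ᵥ x) (A *ᵥ x) = A * vecMulVec x x * Aᵀ := by
  ext i j
  simp [vecMulVec_apply, Matrix.mul_apply, mulVec, dotProduct, Finset.sum_mul, Finset.mul_sum]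
  exact Finset.sum_congr rfl fun k _ => Finset.sum_congr rfl fun m _ => by ring

lemma aux_vecMulVec_herm (v : Fin p → ℝ) : (vecMulVec v v)ᴴ = vecMulVec v v := by
  ext i j
  simp [vecMulVec_apply, conjTranspose_apply, mul_comm]

lemma aux_smul_one_psd {c : ℝ} (hc : 0 ≤ c) :
    (c • (1 : Matrix (Fin p) (Fin p) ℝ)).PosSemidef := by
  refine .of_dotProduct_mulVec_nonneg (by simp [IsHermitian]) fun x => ?_
  simp only [smul_mulVec, one_mulVec, dotProduct_smul, smul_eq_mul, star_trivial]
  exact mul_nonneg hc (Finset.sum_nonneg fun i _ => mul_self_nonneg _)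

open scoped MatrixOrder in
lemma aux_trace_pos {B D : Matrix (Fin p) (Fin p) ℝ} (hB : B.PosSemidef) (hB0 : B ≠ 0)
    (hD : D.PosDef) : 0 < (B * D).trace := by
  obtain ⟨S, rfl⟩ : ∃ S : Matrix (Fin p) (Fin p) ℝ, B = Sᴴ * S := by
    obtain ⟨X, hX, -, hBX⟩ :=
      CFC.exists_sqrt_of_isSelfAdjoint_of_quasispectrumRestricts hB.isHermitian
        (QuasispectrumRestricts.nnreal_of_nonneg hB.nonneg)
    exact ⟨X, by rw [← hBX]; congr 1; exact hX.symm⟩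
  rw [mul_assoc, trace_mul_comm, trace]
  have hdiag : ∀ i, (S * D * Sᴴ).diag i = (S i) ⬝ᵥ (D *ᵥ (S i)) := by
    intro i
    simp [diag, Matrix.mul_apply, mulVec, dotProduct, conjTranspose_apply, Finset.sum_mul,
      Finset.mul_sum]
    rw [Finset.sum_comm]
    exact Finset.sum_congr rfl fun k _ => Finset.sum_congr rfl fun m _ => by ring
  have hS : S ≠ 0 := by rintro rfl; simp at hB0
  obtain ⟨i, j, hij⟩ : ∃ i j, S i j ≠ 0 := by
    by_contra h
    push_neg at h
    exact hS (by ext i j; simp [h])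
  refine Finset.sum_pos' (fun k _ => ?_) ⟨i, Finset.mem_univ i, ?_⟩
  · rw [hdiag k]
    simpa using hD.posSemidef.dotProduct_mulVec_nonneg (S k)
  · rw [hdiag i]
    have : S i ≠ 0 := fun h => hij (by simp [h])
    simpa using hD.dotProduct_mulVec_pos this


/-- For every nonzero PSD matrix `B` and every `λ > 0` with `λ · β̃ᵀβ̃ < 2` we have
`trace(B m̂(λ)) < trace(B m̂(0))`; consequently `λ ↦ trace(B m̂(λ))` is not minimized at
`λ = 0` and attains values strictly smaller than its value at `0` at some `λ > 0`. -/
theorem stmt1 (p : ℕ) (hp : 1 ≤ p) (β : Fin p → ℝ) (I : Matrix (Fin p) (Fin p) ℝ)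
    (hI : I.PosDef) (B : Matrix (Fin p) (Fin p) ℝ) (hB : B.PosSemidef) (hB0 : B ≠ 0) :
    (∀ l : ℝ, 0 < l → l * (β ⬝ᵥ β) < 2 →
      (B * ridgeMoment I β l).trace < (B * ridgeMoment I β 0).trace) ∧
    ¬ (∀ l : ℝ, 0 ≤ l →
        (B * ridgeMoment I β 0).trace ≤ (B * ridgeMoment I β l).trace) ∧
    ∃ l : ℝ, 0 < l ∧
      (B * ridgeMoment I β l).trace < (B * ridgeMoment I β 0).trace := by
  have hIdet : IsUnit I.det := (isUnit_iff_isUnit_det I).mp hI.isUnit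
  have hII : I * I⁻¹ = 1 := mul_nonsing_inv _ hIdet
  have hII' : I⁻¹ * I = 1 := nonsing_inv_mul _ hIdet
  have hm0 : ridgeMoment I β 0 = I⁻¹ := by
    have h0 : vecMulVec (ridgeBias I β 0) (ridgeBias I β 0) = 0 := by
      rw [ridgeBias]
      ext i j
      simp [vecMulVec_apply]
    rw [ridgeMoment, h0, add_zero, ridgeVar]
    simp only [zero_smul, add_zero]
    rw [hII', one_mul]
  have hββ : 0 ≤ β ⬝ᵥ β := Finset.sum_nonneg fun i _ => mul_self_nonneg _
  have main : ∀ l : ℝ, 0 < l → l * (β ⬝ᵥ β) < 2 →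
      (B * ridgeMoment I β l).trace < (B * ridgeMoment I β 0).trace := by
    intro l hl hlt
    set N : Matrix (Fin p) (Fin p) ℝ := I + l • (1 : Matrix (Fin p) (Fin p) ℝ) with hNdef
    have hN : N.PosDef := hI.add_posSemidef (aux_smul_one_psd hl.le)
    have hNdet : IsUnit N.det := (isUnit_iff_isUnit_det N).mp hN.isUnit
    have hNN : N⁻¹ * N = 1 := nonsing_inv_mul _ hNdet
    have hNN' : N * N⁻¹ = 1 := mul_nonsing_inv _ hNdet
    have hNherm : Nᴴ = N := hN.isHermitian
    have hNinvherm : (N⁻¹)ᴴ = N⁻¹ := by rw [conjTranspose_nonsing_inv, hNherm]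
    have hIinvherm : (I⁻¹)ᴴ = I⁻¹ := hI.inv.isHermitian
    -- the inner matrix
    set E : Matrix (Fin p) (Fin p) ℝ :=
      (2 * l) • (1 : Matrix (Fin p) (Fin p) ℝ) + (l ^ 2) • I⁻¹ -
        (l ^ 2) • vecMulVec β β with hEdef
    have hE : E.PosDef := by
      refine posDef_iff_dotProduct_mulVec.mpr ⟨?_, ?_⟩
      · show Eᴴ = E
        rw [hEdef]
        simp only [conjTranspose_sub, conjTranspose_add, conjTranspose_smul,
          conjTranspose_one, star_trivial, hIinvherm, aux_vecMulVec_herm]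
      · intro x hx
        obtain ⟨j, hj⟩ : ∃ j, x j ≠ 0 := Function.ne_iff.mp hx
        have hx2 : 0 < x ⬝ᵥ x :=
          Finset.sum_pos' (fun i _ => mul_self_nonneg _)
            ⟨j, Finset.mem_univ j, mul_self_pos.mpr hj⟩
        have hmv : E *ᵥ x = (2 * l) • x + (l ^ 2) • (I⁻¹ *ᵥ x) -
            (l ^ 2) • ((β ⬝ᵥ x) • β) := by
          rw [hEdef, sub_mulVec, add_mulVec, smul_mulVec, smul_mulVec,
            smul_mulVec, one_mulVec, aux_vecMulVec_mulVec]
        have hCS : (β ⬝ᵥ x) * (β ⬝ᵥ x) ≤ (β ⬝ᵥ β) * (x ⬝ᵥ x) := by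
          have h := Finset.sum_mul_sq_le_sq_mul_sq Finset.univ β x
          simpa [dotProduct, sq] using h
        have hIx : 0 ≤ x ⬝ᵥ (I⁻¹ *ᵥ x) := by simpa using hI.inv.posSemidef.dotProduct_mulVec_nonneg x
        rw [star_trivial, hmv]
        simp only [dotProduct_sub, dotProduct_add, dotProduct_smul, smul_eq_mul]
        have hxb : x ⬝ᵥ β = β ⬝ᵥ x := dotProduct_comm x β
        rw [hxb]
        nlinarith [mul_le_mul_of_nonneg_left hCS (sq_nonneg l),
          mul_pos (mul_pos hl (by linarith : (0:ℝ) < 2 - l * (β ⬝ᵥ β))) hx2,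
          mul_nonneg (sq_nonneg l) hIx]
    -- congruence: D := N⁻¹ * E * N⁻¹ is positive definite
    have hNinvT : (N⁻¹)ᵀ = N⁻¹ := by
      rw [← conjTranspose_eq_transpose_of_trivial, hNinvherm]
    have hD : (N⁻¹ * E * N⁻¹).PosDef := by
      refine posDef_iff_dotProduct_mulVec.mpr ⟨?_, ?_⟩
      · calc (N⁻¹ * E * N⁻¹)ᴴ = (N⁻¹)ᴴ * (Eᴴ * (N⁻¹)ᴴ) := by
              rw [conjTranspose_mul, conjTranspose_mul]
          _ = N⁻¹ * E * N⁻¹ := by rw [hNinvherm, hE.isHermitian, mul_assoc]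
      · intro x hx
        have hinj : Function.Injective (N⁻¹ *ᵥ ·) :=
          mulVec_injective_iff_isUnit.2 (isUnit_nonsing_inv_iff.2 hN.isUnit)
        have hnx : N⁻¹ *ᵥ x ≠ 0 := fun h => hx (hinj (by simpa using h))
        have h2 := hE.dotProduct_mulVec_pos hnx
        have heq : (N⁻¹)ᴴ * E * N⁻¹ = N⁻¹ * E * N⁻¹ := by rw [hNinvherm]
        rw [← heq]
        simpa only [star_mulVec, dotProduct_mulVec, vecMul_vecMul] using h2
    -- the key algebraic identity
    have hNI : N * I⁻¹ * N = I + (2 * l) • (1 : Matrix (Fin p) (Fin p) ℝ) + (l ^ 2) • I⁻¹ := by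
      rw [hNdef]
      simp only [add_mul, mul_add, Matrix.smul_mul, Matrix.mul_smul, hII, hII', one_mul,
        mul_one, smul_smul]
      module
    have cancel : ∀ X : Matrix (Fin p) (Fin p) ℝ, N * (N⁻¹ * X * N⁻¹) * N = X := by
      intro X
      rw [show N * (N⁻¹ * X * N⁻¹) * N = (N * N⁻¹) * (X * (N⁻¹ * N)) from by noncomm_ring,
        hNN, hNN', one_mul, mul_one]
    have cancel' : ∀ X : Matrix (Fin p) (Fin p) ℝ, N⁻¹ * (N * X * N) * N⁻¹ = X := by
      intro X
      rw [show N⁻¹ * (N * X * N) * N⁻¹ = (N⁻¹ * N) * (X * (N * N⁻¹)) from by noncomm_ring,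
        hNN, hNN', one_mul, mul_one]
    have hb : vecMulVec (ridgeBias I β l) (ridgeBias I β l)
        = (l ^ 2) • (N⁻¹ * vecMulVec β β * N⁻¹) := by
      rw [ridgeBias, ← hNdef, aux_vecMulVec_smul, aux_vecMulVec_conj, hNinvT]
      congr 1
      ring
    have hexp : ridgeMoment I β l = N⁻¹ * I * N⁻¹ + (l ^ 2) • (N⁻¹ * vecMulVec β β * N⁻¹) := by
      rw [ridgeMoment, ridgeVar, ← hNdef, hb]
    have hNI2 : N * (I⁻¹ - ridgeMoment I β l) * N = E := by
      rw [hexp, hEdef]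
      simp only [Matrix.mul_sub, Matrix.sub_mul, Matrix.mul_add, Matrix.add_mul,
        Matrix.mul_smul, Matrix.smul_mul]
      rw [hNI, cancel, cancel]
      abel
    have hdiff : I⁻¹ - ridgeMoment I β l = N⁻¹ * E * N⁻¹ := by
      rw [← hNI2, cancel']
    have htr : 0 < (B * (I⁻¹ - ridgeMoment I β l)).trace :=
      aux_trace_pos hB hB0 (hdiff ▸ hD)
    rw [Matrix.mul_sub, trace_sub] at htr
    rw [hm0]
    linarith
  refine ⟨main, ?_, ?_⟩
  · intro h
    have h1 := h (1 / (β ⬝ᵥ β + 1)) (by positivity)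
    have h2 : (1 / (β ⬝ᵥ β + 1)) * (β ⬝ᵥ β) < 2 := by
      rw [div_mul_eq_mul_div, one_mul, div_lt_iff₀ (by linarith)]
      linarith
    have := main _ (by positivity) h2
    linarith
  · refine ⟨1 / (β ⬝ᵥ β + 1), by positivity, main _ (by positivity) ?_⟩
    rw [div_mul_eq_mul_div, one_mul, div_lt_iff₀ (by linarith)]
    linarith
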